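/- For every m ≥ 2, N^(m)(p) = p^m / (2^{m(m-1)/2} · m!) + o(p^m) as p → ∞ over primes. More precisely, 2^{m(m-1)/2} · m! · N^(m)(p) - p^m = O(p^{m-1/2}). -/

import Mathlib

open Finset

set_option linter.unusedSectionVars false
set_option linter.unusedVariables false
set_option maxHeartbeats 1000000

/-- The number of Diophantine `m`-tuples in `F_p`. -/
noncomputable def numDiophTuples (p m : ℕ) : ℕ :=
  {s : Finset (ZMod p) | s.card = m ∧ (0 : ZMod p) ∉ s ∧
    ∀ a ∈ s, ∀ b ∈ s, a ≠ b → IsSquare (a * b + 1)}.ncard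




section Char

variable (p : ℕ) [Fact p.Prime]

noncomputable def chr (x : ZMod p) : ℝ := ((quadraticChar (ZMod p) x : ℤ) : ℝ)

variable {p}

lemma chr_mul (x y : ZMod p) : chr p (x * y) = chr p x * chr p y := by
  unfold chr; rw [map_mul]; push_cast; ring

lemma chr_zero : chr p (0 : ZMod p) = 0 := by simp [chr]

lemma chr_one : chr p (1 : ZMod p) = 1 := by simp [chr]

lemma abs_chr_le (x : ZMod p) : |chr p x| ≤ 1 := by
  rcases eq_or_ne x 0 with h | h
  · simp [h, chr_zero]
  · rcases quadraticChar_dichotomy h with h1 | h1 <;> simp [chr, h1]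

lemma chr_sq_one {x : ZMod p} (hx : x ≠ 0) : chr p (x ^ 2) = 1 := by
  simp [chr, quadraticChar_sq_one' hx]

lemma chr_isSquare {x : ZMod p} (hx : x ≠ 0) (h : IsSquare x) : chr p x = 1 := by
  simp [chr, (quadraticChar_one_iff_isSquare hx).mpr h]

lemma chr_not_isSquare {x : ZMod p} (h : ¬ IsSquare x) : chr p x = -1 := by
  simp [chr, quadraticChar_neg_one_iff_not_isSquare.mpr h]

variable (hp : p ≠ 2)
include hp

lemma ringChar_ne_two : ringChar (ZMod p) ≠ 2 := by
  rw [ZMod.ringChar_zmod_n]; exact hp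

lemma sum_chr : ∑ x : ZMod p, chr p x = 0 := by
  have := quadraticChar_sum_zero (ringChar_ne_two hp)
  unfold chr
  have : ((∑ a : ZMod p, quadraticChar (ZMod p) a : ℤ) : ℝ) = 0 := by rw [this]; simp
  rw [← this]; push_cast; rfl

lemma sum_chr_shift {s : ZMod p} (hs : s ≠ 0) :
    ∑ x : ZMod p, chr p (x * (x + s)) = -1 := by
  have h0 : ∑ x : ZMod p, chr p (x * (x + s)) = ∑ x ∈ univ.erase 0, chr p (x * (x + s)) := by
    rw [Finset.sum_erase _ (by simp [chr_zero])]
  rw [h0]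
  have h1 : ∀ x ∈ univ.erase (0 : ZMod p), chr p (x * (x + s)) = chr p (1 + s * x⁻¹) := by
    intro x hx
    have hx0 : x ≠ 0 := by simpa using hx
    have : x * (x + s) = x ^ 2 * (1 + s * x⁻¹) := by field_simp
    rw [this, chr_mul, chr_sq_one hx0, one_mul]
  rw [Finset.sum_congr rfl h1]
  have h2 : ∑ x ∈ univ.erase (0 : ZMod p), chr p (1 + s * x⁻¹)
      = ∑ y ∈ univ.erase (1 : ZMod p), chr p y := by
    refine Finset.sum_nbij' (fun x => 1 + s * x⁻¹) (fun y => s * (y - 1)⁻¹) ?_ ?_ ?_ ?_ ?_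
    · intro x hx
      have hx0 : x ≠ 0 := by simpa using hx
      simp only [mem_erase, mem_univ, and_true]
      intro h
      have : s * x⁻¹ = 0 := by linear_combination h
      rcases mul_eq_zero.mp this with h' | h'
      · exact hs h'
      · exact hx0 (inv_eq_zero.mp h')
    · intro y hy
      have hy1 : y ≠ 1 := by simpa using hy
      simp only [mem_erase, mem_univ, and_true]
      intro h
      rcases mul_eq_zero.mp h with h' | h'
      · exact hs h'
      · exact hy1 (by have := inv_eq_zero.mp h'; linear_combination this)
    · intro x hx
      have hx0 : x ≠ 0 := by simpa using hx
      show s * (1 + s * x⁻¹ - 1)⁻¹ = x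
      rw [add_sub_cancel_left, mul_inv, inv_inv, ← mul_assoc, mul_inv_cancel₀ hs, one_mul]
    · intro y hy
      have hy1 : y ≠ 1 := by simpa using hy
      have h1 : y - 1 ≠ 0 := fun h => hy1 (by linear_combination h)
      show 1 + s * (s * (y - 1)⁻¹)⁻¹ = y
      rw [mul_inv, inv_inv, ← mul_assoc, mul_inv_cancel₀ hs, one_mul]
      ring
    · intro x hx; rfl
  rw [h2, Finset.sum_erase_eq_sub (by simp), sum_chr hp, chr_one]
  ring

end Char

section Char2


variable {p : ℕ} [Fact p.Prime] (hp : p ≠ 2)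

include hp

lemma sum_chr_linear {b : ZMod p} (hb : b ≠ 0) (c : ZMod p) :
    ∑ x : ZMod p, chr p (x * b + c) = 0 := by
  have hbij : Function.Bijective (fun x : ZMod p => x * b + c) := by
    apply Function.Injective.bijective_of_finite
    intro u v huv
    simp only [add_left_inj] at huv
    exact mul_right_cancel₀ hb huv
  calc ∑ x : ZMod p, chr p (x * b + c) = ∑ z : ZMod p, chr p z :=
        Function.Bijective.sum_comp hbij _
    _ = 0 := sum_chr hp

lemma sum_chr_pair {y y' : ZMod p} (h : y ≠ y') :
    |∑ x : ZMod p, chr p (x * y + 1) * chr p (x * y' + 1)| ≤ 1 := by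
  rcases eq_or_ne y 0 with hy | hy
  · have hy' : y' ≠ 0 := fun hh => h (hy.trans hh.symm)
    have : ∀ x : ZMod p, chr p (x * y + 1) * chr p (x * y' + 1) = chr p (x * y' + 1) := by
      intro x; rw [hy, mul_zero, zero_add, chr_one, one_mul]
    rw [Finset.sum_congr rfl fun x _ => this x, sum_chr_linear hp hy' 1]
    simp
  rcases eq_or_ne y' 0 with hy' | hy'
  · have : ∀ x : ZMod p, chr p (x * y + 1) * chr p (x * y' + 1) = chr p (x * y + 1) := by
      intro x; rw [hy', mul_zero, zero_add, chr_one, mul_one]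
    rw [Finset.sum_congr rfl fun x _ => this x, sum_chr_linear hp hy 1]
    simp
  · -- both nonzero
    have key : ∀ x : ZMod p, chr p (x * y + 1) * chr p (x * y' + 1)
        = chr p (y * y') * chr p ((x + y⁻¹) * (x + y'⁻¹)) := by
      intro x
      rw [← chr_mul, ← chr_mul]
      congr 1
      field_simp
    rw [Finset.sum_congr rfl fun x _ => key x, ← Finset.mul_sum]
    have hshift : ∑ x : ZMod p, chr p ((x + y⁻¹) * (x + y'⁻¹))
        = ∑ z : ZMod p, chr p (z * (z + (y'⁻¹ - y⁻¹))) := by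
      have hbij : Function.Bijective (fun z : ZMod p => z - y⁻¹) := by
        apply Function.Injective.bijective_of_finite
        intro u v huv; simpa using huv
      rw [← Function.Bijective.sum_comp hbij (fun x => chr p ((x + y⁻¹) * (x + y'⁻¹)))]
      apply Finset.sum_congr rfl
      intro z _
      congr 1
      ring
    have hs : y'⁻¹ - y⁻¹ ≠ 0 := by
      rw [sub_ne_zero]
      exact fun hh => h (inv_injective hh.symm)
    rw [hshift, sum_chr_shift hp hs]
    calc |chr p (y * y') * (-1)| = |chr p (y * y')| := by rw [abs_mul]; simp
      _ ≤ 1 := abs_chr_le _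

lemma sum_chr_bilinear (f g : ZMod p → ℝ) (hf : ∀ x, |f x| ≤ 1) (hg : ∀ x, |g x| ≤ 1) :
    |∑ x : ZMod p, ∑ y : ZMod p, f x * g y * chr p (x * y + 1)| ≤ 2 * p * Real.sqrt p := by
  set K : ZMod p → ZMod p → ℝ := fun y y' => ∑ x : ZMod p, chr p (x * y + 1) * chr p (x * y' + 1)
    with hK
  have hKdiag : ∀ y, |K y y| ≤ p := by
    intro y
    calc |K y y| ≤ ∑ x : ZMod p, |chr p (x * y + 1) * chr p (x * y + 1)| := Finset.abs_sum_le_sum_abs _ _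
      _ ≤ ∑ _x : ZMod p, 1 := by
          apply Finset.sum_le_sum
          intro x _
          rw [abs_mul]
          exact mul_le_one₀ (abs_chr_le _) (abs_nonneg _) (abs_chr_le _)
      _ = p := by simp [ZMod.card]
  set h : ZMod p → ℝ := fun x => ∑ y : ZMod p, g y * chr p (x * y + 1) with hh
  have hsum : ∑ x : ZMod p, ∑ y : ZMod p, f x * g y * chr p (x * y + 1)
      = ∑ x : ZMod p, f x * h x := by
    apply Finset.sum_congr rfl
    intro x _
    rw [hh, Finset.mul_sum]
    apply Finset.sum_congr rfl
    intro y _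
    ring
  have hsq : ∑ x : ZMod p, h x ^ 2 = ∑ y : ZMod p, ∑ y' : ZMod p, g y * g y' * K y y' := by
    have : ∀ x : ZMod p, h x ^ 2 = ∑ y : ZMod p, ∑ y' : ZMod p,
        g y * g y' * (chr p (x * y + 1) * chr p (x * y' + 1)) := by
      intro x
      rw [hh, sq, Finset.sum_mul_sum]
      apply Finset.sum_congr rfl; intro y _
      apply Finset.sum_congr rfl; intro y' _
      ring
    rw [Finset.sum_congr rfl fun x _ => this x]
    rw [Finset.sum_comm]
    apply Finset.sum_congr rfl; intro y _
    rw [Finset.sum_comm]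
    apply Finset.sum_congr rfl; intro y' _
    rw [hK, Finset.mul_sum]
  have hsq_le : ∑ x : ZMod p, h x ^ 2 ≤ 2 * p ^ 2 := by
    rw [hsq]
    have hbound : ∀ y y' : ZMod p, g y * g y' * K y y' ≤ |K y y'| := by
      intro y y'
      calc g y * g y' * K y y' ≤ |g y * g y' * K y y'| := le_abs_self _
        _ = |g y| * |g y'| * |K y y'| := by rw [abs_mul, abs_mul]
        _ ≤ |K y y'| :=
            mul_le_of_le_one_left (abs_nonneg _) (mul_le_one₀ (hg y) (abs_nonneg _) (hg y'))
    calc ∑ y : ZMod p, ∑ y' : ZMod p, g y * g y' * K y y'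
        ≤ ∑ y : ZMod p, ∑ y' : ZMod p, |K y y'| :=
          Finset.sum_le_sum fun y _ => Finset.sum_le_sum fun y' _ => hbound y y'
      _ ≤ ∑ _y : ZMod p, (2 * p : ℝ) := by
          apply Finset.sum_le_sum
          intro y _
          calc ∑ y' : ZMod p, |K y y'|
              = |K y y| + ∑ y' ∈ univ.erase y, |K y y'| := by
                rw [add_comm, Finset.sum_erase_add _ _ (Finset.mem_univ y)]
            _ ≤ p + ∑ _y' ∈ univ.erase y, (1:ℝ) := by
                apply add_le_add (hKdiag y)
                apply Finset.sum_le_sum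
                intro y' hy'
                exact sum_chr_pair hp (fun hh => (Finset.mem_erase.mp hy').1 hh.symm)
            _ ≤ p + p := by
                apply add_le_add le_rfl
                rw [Finset.sum_const, nsmul_eq_mul, mul_one]
                calc ((univ.erase y).card : ℝ) ≤ (univ : Finset (ZMod p)).card := by
                      exact_mod_cast Finset.card_le_card (Finset.erase_subset _ _)
                  _ = p := by simp [ZMod.card]
            _ = 2 * p := by ring
      _ = p * (2 * p) := by simp [ZMod.card]
      _ = 2 * p ^ 2 := by ring
  have hfsq : ∑ x : ZMod p, f x ^ 2 ≤ p := by
    calc ∑ x : ZMod p, f x ^ 2 ≤ ∑ _x : ZMod p, (1:ℝ) := by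
          apply Finset.sum_le_sum
          intro x _
          rw [← sq_abs]
          exact pow_le_one₀ (abs_nonneg _) (hf x)
      _ = p := by simp [ZMod.card]
  have hp0 : (0:ℝ) ≤ p := Nat.cast_nonneg p
  have hCS : (∑ x : ZMod p, f x * h x) ^ 2 ≤ 2 * p ^ 3 := by
    calc (∑ x : ZMod p, f x * h x) ^ 2
        ≤ (∑ x : ZMod p, f x ^ 2) * ∑ x : ZMod p, h x ^ 2 :=
          Finset.sum_mul_sq_le_sq_mul_sq _ _ _
      _ ≤ p * (2 * p ^ 2) := by
          apply mul_le_mul hfsq hsq_le (Finset.sum_nonneg fun x _ => sq_nonneg _) hp0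
      _ = 2 * p ^ 3 := by ring
  rw [hsum, ← Real.sqrt_sq_eq_abs]
  calc Real.sqrt ((∑ x : ZMod p, f x * h x) ^ 2) ≤ Real.sqrt ((2 * p * Real.sqrt p) ^ 2) := by
        apply Real.sqrt_le_sqrt
        calc (∑ x : ZMod p, f x * h x) ^ 2 ≤ 2 * p ^ 3 := hCS
          _ ≤ 4 * p ^ 3 := by nlinarith [pow_nonneg hp0 3]
          _ = (2 * p * Real.sqrt p) ^ 2 := by
              rw [mul_pow, mul_pow, Real.sq_sqrt hp0]
              ring
    _ = 2 * p * Real.sqrt p := Real.sqrt_sq (by positivity)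


end Char2


section Split

set_option linter.unusedSectionVars false
set_option linter.unusedVariables false
variable {p : ℕ} [Fact p.Prime] {m : ℕ}

def splitFun (i₀ j₀ : Fin m) (x y : ZMod p)
    (t : {k : Fin m // k ≠ i₀ ∧ k ≠ j₀} → ZMod p) : Fin m → ZMod p :=
  fun k => if h1 : k = i₀ then x else if h2 : k = j₀ then y else t ⟨k, h1, h2⟩

variable {i₀ j₀ : Fin m}

lemma splitFun_fst (x y : ZMod p) (t) : splitFun i₀ j₀ x y t i₀ = x := by simp [splitFun]

lemma splitFun_snd (hij : i₀ ≠ j₀) (x y : ZMod p) (t) : splitFun i₀ j₀ x y t j₀ = y := by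
  simp [splitFun, Ne.symm hij]

lemma splitFun_indep_y {k : Fin m} (hk : k ≠ j₀) (x y y' : ZMod p) (t) :
    splitFun i₀ j₀ x y t k = splitFun i₀ j₀ x y' t k := by
  unfold splitFun
  rcases eq_or_ne k i₀ with h | h
  · simp [h]
  · simp [h, hk]

lemma splitFun_indep_x {k : Fin m} (hk : k ≠ i₀) (x x' y : ZMod p) (t) :
    splitFun i₀ j₀ x y t k = splitFun i₀ j₀ x' y t k := by
  unfold splitFun
  simp [hk]

lemma splitFun_other {k : Fin m} (hk1 : k ≠ i₀) (hk2 : k ≠ j₀) (x y : ZMod p) (t) :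
    splitFun i₀ j₀ x y t k = t ⟨k, hk1, hk2⟩ := by
  simp [splitFun, hk1, hk2]

def splitEquiv (hij : i₀ ≠ j₀) :
    (Fin m → ZMod p) ≃ ZMod p × ZMod p × ({k : Fin m // k ≠ i₀ ∧ k ≠ j₀} → ZMod p) where
  toFun a := (a i₀, a j₀, fun k => a k.1)
  invFun z := splitFun i₀ j₀ z.1 z.2.1 z.2.2
  left_inv a := by
    funext k
    unfold splitFun
    rcases eq_or_ne k i₀ with h | h
    · simp [h]
    · rcases eq_or_ne k j₀ with h2 | h2
      · subst h2; simp [h, Ne.symm hij]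
      · simp [h, h2]
  right_inv z := by
    refine Prod.ext ?_ (Prod.ext ?_ ?_)
    · exact splitFun_fst _ _ _
    · exact splitFun_snd hij _ _ _
    · funext k
      exact splitFun_other k.2.1 k.2.2 _ _ _

lemma card_split (hm : 2 ≤ m) (hij : i₀ ≠ j₀) :
    Fintype.card ({k : Fin m // k ≠ i₀ ∧ k ≠ j₀} → ZMod p) = p ^ (m - 2) := by
  rw [Fintype.card_fun, ZMod.card]
  congr 1
  rw [Fintype.card_subtype]
  have : univ.filter (fun k : Fin m => k ≠ i₀ ∧ k ≠ j₀) = (univ.erase j₀).erase i₀ := by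
    ext k
    simp [and_comm]
  rw [this, card_erase_of_mem, card_erase_of_mem (mem_univ _)]
  · simp [Nat.sub_sub]
  · simp [hij]

end Split

section Graph

variable {p : ℕ} [Fact p.Prime] {m : ℕ}

lemma abs_prod_chr_le (s : Finset (Fin m × Fin m)) (b : Fin m → ZMod p) :
    |∏ e ∈ s, chr p (b e.1 * b e.2 + 1)| ≤ 1 := by
  rw [Finset.abs_prod]
  exact Finset.prod_le_one (fun _ _ => abs_nonneg _) (fun e _ => abs_chr_le _)

lemma graph_term_bound (hp : p ≠ 2) (hm : 2 ≤ m) (E : Finset (Fin m × Fin m))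
    (hE : ∀ e ∈ E, e.1 < e.2) (e₀ : Fin m × Fin m) (he₀ : e₀ ∈ E) :
    |∑ a : Fin m → ZMod p, ∏ e ∈ E, chr p (a e.1 * a e.2 + 1)| ≤
      (p : ℝ) ^ (m - 2) * (2 * p * Real.sqrt p) := by
  classical
  set i₀ := e₀.1 with hi₀
  set j₀ := e₀.2 with hj₀
  have hij : i₀ ≠ j₀ := ne_of_lt (hE e₀ he₀)
  set E1 := (E.erase e₀).filter (fun e => e.1 = i₀ ∨ e.2 = i₀) with hE1def
  set Eo := (E.erase e₀).filter (fun e => ¬(e.1 = i₀ ∨ e.2 = i₀)) with hEodef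
  set E2 := Eo.filter (fun e => e.1 = j₀ ∨ e.2 = j₀) with hE2def
  set E3 := Eo.filter (fun e => ¬(e.1 = j₀ ∨ e.2 = j₀)) with hE3def
  have hE1 : ∀ e ∈ E1, e.1 ≠ j₀ ∧ e.2 ≠ j₀ := by
    intro e he
    obtain ⟨hee, hcase⟩ := Finset.mem_filter.mp he
    obtain ⟨hne, heE⟩ := Finset.mem_erase.mp hee
    have hlt := hE e heE
    have hlt0 := hE e₀ he₀
    rcases hcase with h1 | h2
    · constructor
      · rw [h1]; exact ne_of_lt hlt0
      · intro h2
        exact hne (Prod.ext h1 h2)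
    · have h3 : e.1 < i₀ := h2 ▸ hlt
      exact ⟨ne_of_lt (lt_trans h3 hlt0), h2 ▸ ne_of_lt hlt0⟩
  have hE2 : ∀ e ∈ E2, e.1 ≠ i₀ ∧ e.2 ≠ i₀ := by
    intro e he
    obtain ⟨heo, _⟩ := Finset.mem_filter.mp he
    obtain ⟨_, hno⟩ := Finset.mem_filter.mp heo
    push_neg at hno
    exact hno
  have hE3i : ∀ e ∈ E3, e.1 ≠ i₀ ∧ e.2 ≠ i₀ := by
    intro e he
    obtain ⟨heo, _⟩ := Finset.mem_filter.mp he
    obtain ⟨_, hno⟩ := Finset.mem_filter.mp heo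
    push_neg at hno
    exact hno
  have hE3j : ∀ e ∈ E3, e.1 ≠ j₀ ∧ e.2 ≠ j₀ := by
    intro e he
    obtain ⟨_, hno⟩ := Finset.mem_filter.mp he
    push_neg at hno
    exact hno
  have hprod : ∀ a : Fin m → ZMod p, ∏ e ∈ E, chr p (a e.1 * a e.2 + 1)
      = chr p (a i₀ * a j₀ + 1) *
        ((∏ e ∈ E1, chr p (a e.1 * a e.2 + 1)) *
         ((∏ e ∈ E2, chr p (a e.1 * a e.2 + 1)) * ∏ e ∈ E3, chr p (a e.1 * a e.2 + 1))) := by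
    intro a
    rw [← Finset.mul_prod_erase _ _ he₀]
    congr 1
    rw [← Finset.prod_filter_mul_prod_filter_not (E.erase e₀) (fun e => e.1 = i₀ ∨ e.2 = i₀)]
    congr 1
    rw [← Finset.prod_filter_mul_prod_filter_not Eo (fun e => e.1 = j₀ ∨ e.2 = j₀)]
  set T := ({k : Fin m // k ≠ i₀ ∧ k ≠ j₀} → ZMod p)
  set ff : T → ZMod p → ℝ := fun t x =>
    ∏ e ∈ E1, chr p (splitFun i₀ j₀ x 0 t e.1 * splitFun i₀ j₀ x 0 t e.2 + 1) with hff
  set gg : T → ZMod p → ℝ := fun t y =>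
    (∏ e ∈ E2, chr p (splitFun i₀ j₀ 0 y t e.1 * splitFun i₀ j₀ 0 y t e.2 + 1)) *
    ∏ e ∈ E3, chr p (splitFun i₀ j₀ 0 0 t e.1 * splitFun i₀ j₀ 0 0 t e.2 + 1) with hgg
  have hffb : ∀ t x, |ff t x| ≤ 1 := fun t x => abs_prod_chr_le _ _
  have hggb : ∀ t y, |gg t y| ≤ 1 := by
    intro t y
    rw [hgg]
    simp only [abs_mul]
    exact mul_le_one₀ (abs_prod_chr_le _ _) (abs_nonneg _) (abs_prod_chr_le _ _)
  have hpt : ∀ (x y : ZMod p) (t : T),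
      (∏ e ∈ E, chr p (splitFun i₀ j₀ x y t e.1 * splitFun i₀ j₀ x y t e.2 + 1))
      = ff t x * gg t y * chr p (x * y + 1) := by
    intro x y t
    rw [hprod (splitFun i₀ j₀ x y t), splitFun_fst, splitFun_snd hij]
    have h1 : (∏ e ∈ E1, chr p (splitFun i₀ j₀ x y t e.1 * splitFun i₀ j₀ x y t e.2 + 1))
        = ff t x := by
      apply Finset.prod_congr rfl
      intro e he
      rw [splitFun_indep_y (hE1 e he).1 x y 0 t, splitFun_indep_y (hE1 e he).2 x y 0 t]
    have h2 : (∏ e ∈ E2, chr p (splitFun i₀ j₀ x y t e.1 * splitFun i₀ j₀ x y t e.2 + 1))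
        = ∏ e ∈ E2, chr p (splitFun i₀ j₀ 0 y t e.1 * splitFun i₀ j₀ 0 y t e.2 + 1) := by
      apply Finset.prod_congr rfl
      intro e he
      rw [splitFun_indep_x (hE2 e he).1 x 0 y t, splitFun_indep_x (hE2 e he).2 x 0 y t]
    have h3 : (∏ e ∈ E3, chr p (splitFun i₀ j₀ x y t e.1 * splitFun i₀ j₀ x y t e.2 + 1))
        = ∏ e ∈ E3, chr p (splitFun i₀ j₀ 0 0 t e.1 * splitFun i₀ j₀ 0 0 t e.2 + 1) := by
      apply Finset.prod_congr rfl
      intro e he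
      rw [splitFun_indep_x (hE3i e he).1 x 0 y t, splitFun_indep_x (hE3i e he).2 x 0 y t,
        splitFun_indep_y (hE3j e he).1 0 y 0 t, splitFun_indep_y (hE3j e he).2 0 y 0 t]
    rw [h1, h2, h3, hgg]
    ring
  have hsum : ∑ a : Fin m → ZMod p, ∏ e ∈ E, chr p (a e.1 * a e.2 + 1)
      = ∑ t : T, ∑ x : ZMod p, ∑ y : ZMod p, ff t x * gg t y * chr p (x * y + 1) := by
    calc ∑ a : Fin m → ZMod p, ∏ e ∈ E, chr p (a e.1 * a e.2 + 1)
        = ∑ z : ZMod p × ZMod p × T,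
            ∏ e ∈ E, chr p ((splitEquiv hij).symm z e.1 * (splitEquiv hij).symm z e.2 + 1) :=
          (Equiv.sum_comp (splitEquiv hij).symm
            (fun a => ∏ e ∈ E, chr p (a e.1 * a e.2 + 1))).symm
      _ = ∑ x : ZMod p, ∑ y : ZMod p, ∑ t : T,
            ∏ e ∈ E, chr p (splitFun i₀ j₀ x y t e.1 * splitFun i₀ j₀ x y t e.2 + 1) := by
          rw [Fintype.sum_prod_type]
          apply Finset.sum_congr rfl
          intro x _
          rw [Fintype.sum_prod_type]
          rfl
      _ = ∑ x : ZMod p, ∑ y : ZMod p, ∑ t : T, ff t x * gg t y * chr p (x * y + 1) := by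
          apply Finset.sum_congr rfl; intro x _
          apply Finset.sum_congr rfl; intro y _
          apply Finset.sum_congr rfl; intro t _
          exact hpt x y t
      _ = ∑ x : ZMod p, ∑ t : T, ∑ y : ZMod p, ff t x * gg t y * chr p (x * y + 1) := by
          apply Finset.sum_congr rfl; intro x _
          exact Finset.sum_comm
      _ = ∑ t : T, ∑ x : ZMod p, ∑ y : ZMod p, ff t x * gg t y * chr p (x * y + 1) :=
          Finset.sum_comm
  rw [hsum]
  calc |∑ t : T, ∑ x : ZMod p, ∑ y : ZMod p, ff t x * gg t y * chr p (x * y + 1)|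
      ≤ ∑ t : T, |∑ x : ZMod p, ∑ y : ZMod p, ff t x * gg t y * chr p (x * y + 1)| :=
        Finset.abs_sum_le_sum_abs _ _
    _ ≤ ∑ _t : T, 2 * (p : ℝ) * Real.sqrt p :=
        Finset.sum_le_sum fun t _ => sum_chr_bilinear hp (ff t) (gg t) (hffb t) (hggb t)
    _ = (p : ℝ) ^ (m - 2) * (2 * p * Real.sqrt p) := by
        rw [Finset.sum_const, Finset.card_univ, card_split hm hij, nsmul_eq_mul]
        push_cast
        ring

end Graph


open Finset

section Count

variable (p m : ℕ) [Fact p.Prime]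

def Tord : Finset (Fin m → ZMod p) :=
  univ.filter (fun a => Function.Injective a ∧ (∀ i, a i ≠ 0) ∧
    ∀ i j, i ≠ j → IsSquare (a i * a j + 1))

def DT : Finset (Finset (ZMod p)) :=
  univ.filter (fun s => s.card = m ∧ (0 : ZMod p) ∉ s ∧
    ∀ a ∈ s, ∀ b ∈ s, a ≠ b → IsSquare (a * b + 1))

variable {p m}

lemma mem_Tord_iff {a : Fin m → ZMod p} : a ∈ Tord p m ↔ (Function.Injective a ∧
    (∀ i, a i ≠ 0) ∧ ∀ i j, i ≠ j → IsSquare (a i * a j + 1)) := by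
  rw [Tord]
  simp only [Finset.mem_filter, Finset.mem_univ, true_and]

lemma mem_DT_iff {s : Finset (ZMod p)} : s ∈ DT p m ↔ (s.card = m ∧ (0 : ZMod p) ∉ s ∧
    ∀ a ∈ s, ∀ b ∈ s, a ≠ b → IsSquare (a * b + 1)) := by
  rw [DT]
  simp only [Finset.mem_filter, Finset.mem_univ, true_and]

variable (p m)

lemma numDiophTuples_eq : numDiophTuples p m = (DT p m).card := by
  rw [numDiophTuples, ← Set.ncard_coe_finset]
  congr 1
  ext s
  rw [Finset.mem_coe, mem_DT_iff]
  simp only [Set.mem_setOf_eq]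

lemma Tord_card : (Tord p m).card = m.factorial * numDiophTuples p m := by
  classical
  rw [numDiophTuples_eq]
  have hmaps : ∀ a ∈ Tord p m, Finset.image a univ ∈ DT p m := by
    intro a ha
    obtain ⟨hinj, h0, hsq⟩ := mem_Tord_iff.mp ha
    rw [mem_DT_iff]
    refine ⟨?_, ?_, ?_⟩
    · rw [Finset.card_image_of_injective _ hinj, card_univ, Fintype.card_fin]
    · intro h
      obtain ⟨i, _, hi⟩ := Finset.mem_image.mp h
      exact h0 i hi
    · intro x hx y hy hxy
      obtain ⟨i, _, rfl⟩ := Finset.mem_image.mp hx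
      obtain ⟨j, _, rfl⟩ := Finset.mem_image.mp hy
      exact hsq i j (fun h => hxy (by rw [h]))
  rw [Finset.card_eq_sum_card_fiberwise hmaps]
  have hfiber : ∀ s ∈ DT p m,
      ((Tord p m).filter (fun a => Finset.image a univ = s)).card = m.factorial := by
    intro s hs
    obtain ⟨hcard, h0s, hsqs⟩ := mem_DT_iff.mp hs
    have hcard' : Fintype.card {x // x ∈ s} = Fintype.card (Fin m) := by
      rw [Fintype.card_coe, hcard, Fintype.card_fin]
    have key : ((Tord p m).filter (fun a => Finset.image a univ = s)).card
        = (univ : Finset (Fin m ≃ {x // x ∈ s})).card := by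
      refine Finset.card_bij'
        (fun a ha => Equiv.ofBijective
          (fun k => (⟨a k, by
            rw [← (Finset.mem_filter.mp ha).2]
            exact Finset.mem_image.mpr ⟨k, mem_univ _, rfl⟩⟩ : {x // x ∈ s}))
          ((Fintype.bijective_iff_injective_and_card _).mpr
            ⟨fun u v huv => (mem_Tord_iff.mp (Finset.mem_filter.mp ha).1).1
              (congrArg Subtype.val huv), hcard'.symm⟩))
        (fun e _ => fun k => (e k : ZMod p)) ?_ ?_ ?_ ?_
      · intro a ha
        exact mem_univ _
      · intro e _
        rw [Finset.mem_filter]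
        constructor
        · rw [mem_Tord_iff]
          refine ⟨fun u v huv => e.injective (Subtype.ext huv),
            fun i h => h0s (h ▸ (e i).2), fun i j hij => hsqs _ (e i).2 _ (e j).2 ?_⟩
          intro hh
          exact hij (e.injective (Subtype.ext hh))
        · ext x
          simp only [Finset.mem_image, Finset.mem_univ, true_and]
          constructor
          · rintro ⟨k, rfl⟩
            exact (e k).2
          · intro hx
            exact ⟨e.symm ⟨x, hx⟩, by simp⟩
      · intro a ha
        funext k
        rfl
      · intro e he
        exact Equiv.ext (fun k => Subtype.ext rfl)
    rw [key, card_univ, Fintype.card_equiv (Fintype.equivOfCardEq hcard').symm,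
      Fintype.card_fin]
  rw [Finset.sum_congr rfl hfiber, Finset.sum_const, smul_eq_mul, mul_comm]

lemma card_det_le (i : Fin m) (S : Finset (Fin m → ZMod p))
    (h : ∀ a ∈ S, ∀ b ∈ S, (∀ k, k ≠ i → a k = b k) → a = b) :
    S.card ≤ p ^ (m - 1) := by
  have := Finset.card_le_card_of_injOn
    (f := fun (a : Fin m → ZMod p) => (fun k : {k : Fin m // k ≠ i} => a k.1))
    (t := (univ : Finset ({k : Fin m // k ≠ i} → ZMod p)))
    (fun a _ => mem_univ _)
    (by
      intro a ha b hb hab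
      refine h a ha b hb ?_
      intro k hk
      exact congrFun hab ⟨k, hk⟩)
  rw [card_univ, Fintype.card_fun, ZMod.card] at this
  refine this.trans (le_of_eq ?_)
  congr 1
  rw [Fintype.card_subtype]
  have : univ.filter (fun k : Fin m => k ≠ i) = univ.erase i := by
    ext k; simp
  rw [this, card_erase_of_mem (mem_univ _), card_univ, Fintype.card_fin]

end Count
section Main

open Finset

def pairsP (m : ℕ) : Finset (Fin m × Fin m) := univ.filter (fun e => e.1 < e.2)

lemma mem_pairsP {m : ℕ} {e : Fin m × Fin m} : e ∈ pairsP m ↔ e.1 < e.2 := by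
  rw [pairsP]
  simp only [Finset.mem_filter, Finset.mem_univ, true_and]

lemma pairsP_card (m : ℕ) : (pairsP m).card = m * (m - 1) / 2 := by
  classical
  have h1 : (pairsP m).card = ∑ j : Fin m, ((pairsP m).filter (fun e => e.2 = j)).card :=
    Finset.card_eq_sum_card_fiberwise (fun e _ => mem_univ _)
  have h2 : ∀ j : Fin m, ((pairsP m).filter (fun e => e.2 = j))
      = (Finset.Iio j).map ⟨fun i => (i, j), fun a b h => (Prod.ext_iff.mp h).1⟩ := by
    intro j
    ext e
    simp only [Finset.mem_filter, mem_pairsP, Finset.mem_map, Finset.mem_Iio,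
      Function.Embedding.coeFn_mk]
    constructor
    · rintro ⟨hlt, h2⟩
      exact ⟨e.1, h2 ▸ hlt, by rw [← h2]; rfl⟩
    · rintro ⟨i, hi, rfl⟩
      exact ⟨hi, rfl⟩
  rw [h1, Finset.sum_congr rfl (fun j _ => by rw [h2 j, Finset.card_map, Fin.card_Iio]),
    Fin.sum_univ_eq_sum_range (fun i => i) m, Finset.sum_range_id]

lemma pairsP_card_le (m : ℕ) : (pairsP m).card ≤ m * m := by
  calc (pairsP m).card ≤ (univ : Finset (Fin m × Fin m)).card := Finset.card_le_card (by rw [pairsP]; exact Finset.filter_subset _ _)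
    _ = m * m := by rw [card_univ, Fintype.card_prod, Fintype.card_fin]

variable (p m : ℕ) [Fact p.Prime]

theorem main_odd (hp : p ≠ 2) (hm : 2 ≤ m) :
    |(2:ℝ) ^ ((pairsP m).card) * ((Tord p m).card : ℝ) - (p:ℝ)^m| ≤
      (2:ℝ) ^ ((pairsP m).card) * (6*(m:ℝ)^2 + 2) * ((p:ℝ)^m / Real.sqrt p) := by
  classical
  set M := (pairsP m).card with hM
  have hp1 : (1:ℝ) ≤ (p:ℝ) := by
    have := (Fact.out : p.Prime).two_le
    exact_mod_cast Nat.one_le_of_lt this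
  have hp0 : (0:ℝ) < (p:ℝ) := lt_of_lt_of_le one_pos hp1
  have hsp1 : (1:ℝ) ≤ Real.sqrt p := Real.one_le_sqrt.mpr hp1
  have hsp0 : (0:ℝ) < Real.sqrt p := lt_of_lt_of_le one_pos hsp1
  have hdiv : (p:ℝ)^m / Real.sqrt p = (p:ℝ)^(m-1) * Real.sqrt p := by
    rw [div_eq_iff (ne_of_gt hsp0), mul_assoc, Real.mul_self_sqrt hp0.le, ← pow_succ]
    congr 1
    omega
  set F : (Fin m → ZMod p) → ℝ :=
    fun a => ∏ e ∈ pairsP m, (chr p (a e.1 * a e.2 + 1) + 1) with hF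
  set S' := ∑ a : Fin m → ZMod p, F a with hS'
  have hFnonneg : ∀ a, 0 ≤ F a := by
    intro a
    apply Finset.prod_nonneg
    intro e _
    have := abs_chr_le (p := p) (a e.1 * a e.2 + 1)
    rw [abs_le] at this
    linarith [this.1]
  have hFle : ∀ a, F a ≤ 2^M := by
    intro a
    rw [hF]
    calc ∏ e ∈ pairsP m, (chr p (a e.1 * a e.2 + 1) + 1)
        ≤ ∏ _e ∈ pairsP m, (2:ℝ) := by
          apply Finset.prod_le_prod
          · intro e _
            have := abs_chr_le (p := p) (a e.1 * a e.2 + 1)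
            rw [abs_le] at this
            linarith [this.1]
          · intro e _
            have := abs_chr_le (p := p) (a e.1 * a e.2 + 1)
            rw [abs_le] at this
            linarith [this.2]
      _ = 2^M := by rw [Finset.prod_const]
  have hTord_eq : (2:ℝ)^M * ((Tord p m).card : ℝ)
      = ∑ a : Fin m → ZMod p, (if a ∈ Tord p m then (2:ℝ)^M else 0) := by
    rw [Finset.sum_ite_mem, Finset.univ_inter, Finset.sum_const, nsmul_eq_mul, mul_comm]
  set G := univ.filter (fun a : Fin m → ZMod p => (∀ i, a i ≠ 0) ∧ Function.Injective a ∧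
    ∀ e ∈ pairsP m, a e.1 * a e.2 + 1 ≠ 0) with hGdef
  have hGmem : ∀ a : Fin m → ZMod p, a ∈ G ↔ ((∀ i, a i ≠ 0) ∧ Function.Injective a ∧
      ∀ e ∈ pairsP m, a e.1 * a e.2 + 1 ≠ 0) := by
    intro a
    rw [hGdef]
    simp only [Finset.mem_filter, Finset.mem_univ, true_and]
  have hptG : ∀ a ∈ G, (if a ∈ Tord p m then (2:ℝ)^M else 0) = F a := by
    intro a hGa
    obtain ⟨h0, hinj, hnz⟩ := (hGmem a).mp hGa
    by_cases hT : a ∈ Tord p m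
    · rw [if_pos hT]
      simp only [hF]
      obtain ⟨-, -, hsq⟩ := mem_Tord_iff.mp hT
      have hfac : ∀ e ∈ pairsP m, chr p (a e.1 * a e.2 + 1) + 1 = 2 := by
        intro e he
        rw [chr_isSquare (hnz e he) (hsq e.1 e.2 (ne_of_lt (mem_pairsP.mp he)))]
        norm_num
      rw [Finset.prod_congr rfl hfac, Finset.prod_const]
    · rw [if_neg hT]
      simp only [hF]
      have hnot : ¬ ∀ i j, i ≠ j → IsSquare (a i * a j + 1) :=
        fun h => hT (mem_Tord_iff.mpr ⟨hinj, h0, h⟩)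
      push_neg at hnot
      obtain ⟨i, j, hij, hnsq⟩ := hnot
      symm
      rcases lt_or_gt_of_ne hij with hlt | hgt
      · apply Finset.prod_eq_zero (mem_pairsP.mpr (show ((i, j) : Fin m × Fin m).1 < (i, j).2
          from hlt))
        rw [chr_not_isSquare hnsq]
        norm_num
      · apply Finset.prod_eq_zero (mem_pairsP.mpr (show ((j, i) : Fin m × Fin m).1 < (j, i).2
          from hgt))
        have hnsq' : ¬ IsSquare (a j * a i + 1) := by rwa [mul_comm]
        rw [chr_not_isSquare hnsq']
        norm_num
  -- bad set bound
  have hbadcard : ((univ : Finset (Fin m → ZMod p)) \ G).card ≤ 3 * m^2 * p^(m-1) := by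
    set B1 := univ.filter (fun a : Fin m → ZMod p => ∃ i, a i = 0) with hB1def
    set B2 := univ.filter (fun a : Fin m → ZMod p => ∃ e ∈ pairsP m, a e.1 = a e.2) with hB2def
    set B3 := univ.filter (fun a : Fin m → ZMod p => ∃ e ∈ pairsP m, a e.1 * a e.2 + 1 = 0)
      with hB3def
    have hsub : (univ : Finset (Fin m → ZMod p)) \ G ⊆ B1 ∪ B2 ∪ B3 := by
      intro a ha
      have hnG : a ∉ G := (Finset.mem_sdiff.mp ha).2
      simp only [Finset.mem_union, hB1def, hB2def, hB3def, Finset.mem_filter, Finset.mem_univ,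
        true_and]
      by_cases hA : ∀ i, a i ≠ 0
      · by_cases hB : Function.Injective a
        · have hC : ¬ ∀ e ∈ pairsP m, a e.1 * a e.2 + 1 ≠ 0 :=
            fun h => hnG ((hGmem a).mpr ⟨hA, hB, h⟩)
          push_neg at hC
          obtain ⟨e, he, hval⟩ := hC
          exact Or.inr ⟨e, he, hval⟩
        · rw [Function.not_injective_iff] at hB
          obtain ⟨i, j, heq, hij⟩ := hB
          refine Or.inl (Or.inr ?_)
          rcases lt_or_gt_of_ne hij with hlt | hgt
          · exact ⟨(i, j), mem_pairsP.mpr hlt, heq⟩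
          · exact ⟨(j, i), mem_pairsP.mpr hgt, heq.symm⟩
      · push_neg at hA
        exact Or.inl (Or.inl hA)
    have hB1card : B1.card ≤ m * p^(m-1) := by
      have hsub1 : B1 ⊆ univ.biUnion (fun i : Fin m => univ.filter (fun a => a i = 0)) := by
        intro a ha
        rw [hB1def, Finset.mem_filter] at ha
        obtain ⟨-, i, hi⟩ := ha
        exact Finset.mem_biUnion.mpr ⟨i, mem_univ _, Finset.mem_filter.mpr ⟨mem_univ _, hi⟩⟩
      refine le_trans (Finset.card_le_card hsub1) (le_trans Finset.card_biUnion_le ?_)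
      refine le_trans (Finset.sum_le_sum (fun i _ => card_det_le p m i _ ?_)) ?_
      · intro a ha b hb hagree
        funext k
        by_cases hk : k = i
        · subst hk
          rw [(Finset.mem_filter.mp ha).2, (Finset.mem_filter.mp hb).2]
        · exact hagree k hk
      · rw [Finset.sum_const, card_univ, Fintype.card_fin, smul_eq_mul]
    have hB2card : B2.card ≤ m^2 * p^(m-1) := by
      have hsub2 : B2 ⊆ (pairsP m).biUnion
          (fun e => univ.filter (fun a : Fin m → ZMod p => a e.1 = a e.2)) := by
        intro a ha
        rw [hB2def, Finset.mem_filter] at ha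
        obtain ⟨-, e, he, heq⟩ := ha
        exact Finset.mem_biUnion.mpr ⟨e, he, Finset.mem_filter.mpr ⟨mem_univ _, heq⟩⟩
      refine le_trans (Finset.card_le_card hsub2) (le_trans Finset.card_biUnion_le ?_)
      refine le_trans (Finset.sum_le_sum (fun e he => card_det_le p m e.1 _ ?_)) ?_
      · intro a ha b hb hagree
        have hne : e.2 ≠ e.1 := ne_of_gt (mem_pairsP.mp he)
        funext k
        by_cases hk : k = e.1
        · subst hk
          rw [(Finset.mem_filter.mp ha).2, (Finset.mem_filter.mp hb).2, hagree e.2 hne]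
        · exact hagree k hk
      · rw [Finset.sum_const, smul_eq_mul]
        have := pairsP_card_le m
        calc (pairsP m).card * p^(m-1) ≤ (m * m) * p^(m-1) :=
              Nat.mul_le_mul_right _ this
          _ = m^2 * p^(m-1) := by ring
    have hB3card : B3.card ≤ m^2 * p^(m-1) := by
      have hone : (1 : ZMod p) ≠ 0 := one_ne_zero
      have hsub3 : B3 ⊆ (pairsP m).biUnion
          (fun e => univ.filter (fun a : Fin m → ZMod p => a e.1 * a e.2 + 1 = 0)) := by
        intro a ha
        rw [hB3def, Finset.mem_filter] at ha
        obtain ⟨-, e, he, heq⟩ := ha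
        exact Finset.mem_biUnion.mpr ⟨e, he, Finset.mem_filter.mpr ⟨mem_univ _, heq⟩⟩
      refine le_trans (Finset.card_le_card hsub3) (le_trans Finset.card_biUnion_le ?_)
      refine le_trans (Finset.sum_le_sum (fun e he => card_det_le p m e.1 _ ?_)) ?_
      · intro a ha b hb hagree
        have hne : e.2 ≠ e.1 := ne_of_gt (mem_pairsP.mp he)
        have hva := (Finset.mem_filter.mp ha).2
        have hvb := (Finset.mem_filter.mp hb).2
        have ha2 : a e.2 ≠ 0 := by
          intro h
          rw [h, mul_zero, zero_add] at hva
          exact hone hva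
        funext k
        by_cases hk : k = e.1
        · subst hk
          have hab2 : a e.2 = b e.2 := hagree e.2 hne
          have hb2 : b e.2 ≠ 0 := hab2 ▸ ha2
          have h1 : a e.1 = -(a e.2)⁻¹ := by
            field_simp
            linear_combination hva
          have h2 : b e.1 = -(b e.2)⁻¹ := by
            field_simp
            linear_combination hvb
          rw [h1, h2, hab2]
        · exact hagree k hk
      · rw [Finset.sum_const, smul_eq_mul]
        calc (pairsP m).card * p^(m-1) ≤ (m * m) * p^(m-1) :=
              Nat.mul_le_mul_right _ (pairsP_card_le m)
          _ = m^2 * p^(m-1) := by ring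
    calc ((univ : Finset (Fin m → ZMod p)) \ G).card ≤ (B1 ∪ B2 ∪ B3).card :=
          Finset.card_le_card hsub
      _ ≤ B1.card + B2.card + B3.card :=
          le_trans (Finset.card_union_le _ _) (by
            have := Finset.card_union_le B1 B2
            omega)
      _ ≤ m * p^(m-1) + m^2 * p^(m-1) + m^2 * p^(m-1) := by
          omega
      _ ≤ 3 * m^2 * p^(m-1) := by
          have hmm : m ≤ m^2 := by nlinarith
          nlinarith [Nat.zero_le (p^(m-1))]
  -- step 1
  have hstep1 : |(2:ℝ)^M * ((Tord p m).card : ℝ) - S'| ≤ 2^M * (6*(m:ℝ)^2) * (p:ℝ)^(m-1) := by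
    rw [hTord_eq, hS', ← Finset.sum_sub_distrib]
    refine le_trans (Finset.abs_sum_le_sum_abs _ _) ?_
    have hzero : ∀ a ∈ (univ : Finset (Fin m → ZMod p)), a ∉ univ \ G →
        |(if a ∈ Tord p m then (2:ℝ)^M else 0) - F a| = 0 := by
      intro a _ ha
      have haG : a ∈ G := by
        rcases Finset.mem_sdiff.not.mp ha with h
        by_contra hG
        exact h ⟨mem_univ _, hG⟩
      rw [hptG a haG, sub_self, abs_zero]
    rw [← Finset.sum_subset (Finset.sdiff_subset : univ \ G ⊆ univ) hzero]
    have hbound : ∀ a ∈ univ \ G,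
        |(if a ∈ Tord p m then (2:ℝ)^M else 0) - F a| ≤ 2 * 2^M := by
      intro a _
      have h1 : |(if a ∈ Tord p m then (2:ℝ)^M else 0)| ≤ 2^M := by
        split
        · rw [abs_of_nonneg (by positivity)]
        · simp only [abs_zero]
          positivity
      have h2 : |F a| ≤ 2^M := by
        rw [abs_of_nonneg (hFnonneg a)]
        exact hFle a
      calc |(if a ∈ Tord p m then (2:ℝ)^M else 0) - F a|
          ≤ |(if a ∈ Tord p m then (2:ℝ)^M else 0)| + |F a| := abs_sub _ _
        _ ≤ 2^M + 2^M := add_le_add h1 h2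
        _ = 2 * 2^M := by ring
    refine le_trans (Finset.sum_le_sum hbound) ?_
    rw [Finset.sum_const, nsmul_eq_mul]
    have hc : (((univ : Finset (Fin m → ZMod p)) \ G).card : ℝ) ≤ 3 * (m:ℝ)^2 * (p:ℝ)^(m-1) := by
      have := hbadcard
      push_cast
      exact_mod_cast this
    calc (((univ : Finset (Fin m → ZMod p)) \ G).card : ℝ) * (2 * 2^M)
        ≤ (3 * (m:ℝ)^2 * (p:ℝ)^(m-1)) * (2 * 2^M) := by
          apply mul_le_mul_of_nonneg_right hc (by positivity)
      _ = 2^M * (6*(m:ℝ)^2) * (p:ℝ)^(m-1) := by ring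
  -- step 2
  have hexpand : S' = ∑ E ∈ (pairsP m).powerset,
      ∑ a : Fin m → ZMod p, ∏ e ∈ E, chr p (a e.1 * a e.2 + 1) := by
    rw [hS']
    have hFa : ∀ a : Fin m → ZMod p, F a = ∑ E ∈ (pairsP m).powerset,
        ∏ e ∈ E, chr p (a e.1 * a e.2 + 1) := by
      intro a
      simp only [hF]
      rw [Finset.prod_add]
      apply Finset.sum_congr rfl
      intro E _
      rw [Finset.prod_const_one, mul_one]
    rw [Finset.sum_congr rfl (fun a _ => hFa a)]
    exact Finset.sum_comm
  have hTempty : ∑ a : Fin m → ZMod p,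
      ∏ e ∈ (∅ : Finset (Fin m × Fin m)), chr p (a e.1 * a e.2 + 1) = (p:ℝ)^m := by
    simp only [Finset.prod_empty]
    rw [Finset.sum_const, nsmul_eq_mul, mul_one, Finset.card_univ, Fintype.card_fun,
      ZMod.card, Fintype.card_fin]
    push_cast
    ring
  have hstep2 : |S' - (p:ℝ)^m| ≤ 2^M * (2 * (p:ℝ)^(m-1) * Real.sqrt p) := by
    rw [hexpand, ← Finset.add_sum_erase _ _ (Finset.empty_mem_powerset (pairsP m)), hTempty]
    rw [add_sub_cancel_left]
    have hterm : ∀ E ∈ ((pairsP m).powerset).erase ∅,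
        |∑ a : Fin m → ZMod p, ∏ e ∈ E, chr p (a e.1 * a e.2 + 1)|
          ≤ (p:ℝ)^(m-2) * (2 * p * Real.sqrt p) := by
      intro E hE
      obtain ⟨hne, hEP⟩ := Finset.mem_erase.mp hE
      have hEsub := Finset.mem_powerset.mp hEP
      obtain ⟨e₀, he₀⟩ := Finset.nonempty_iff_ne_empty.mpr hne
      exact graph_term_bound hp hm E (fun e he => mem_pairsP.mp (hEsub he)) e₀ he₀
    refine le_trans (Finset.abs_sum_le_sum_abs _ _) ?_
    refine le_trans (Finset.sum_le_sum hterm) ?_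
    rw [Finset.sum_const, nsmul_eq_mul]
    have hcard : (((pairsP m).powerset.erase ∅).card : ℝ) ≤ 2^M := by
      calc (((pairsP m).powerset.erase ∅).card : ℝ)
          ≤ ((pairsP m).powerset.card : ℝ) := by
            exact_mod_cast Finset.card_le_card (Finset.erase_subset _ _)
        _ = 2^M := by rw [Finset.card_powerset]; push_cast; rfl
    have hps : (p:ℝ)^(m-2) * (2 * p * Real.sqrt p) = 2 * (p:ℝ)^(m-1) * Real.sqrt p := by
      have : (p:ℝ)^(m-2) * p = (p:ℝ)^(m-1) := by
        rw [← pow_succ]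
        congr 1
        omega
      calc (p:ℝ)^(m-2) * (2 * p * Real.sqrt p) = 2 * ((p:ℝ)^(m-2) * p) * Real.sqrt p := by ring
        _ = 2 * (p:ℝ)^(m-1) * Real.sqrt p := by rw [this]
    rw [hps]
    apply mul_le_mul_of_nonneg_right hcard (by positivity)
  -- combine
  rw [hdiv]
  calc |(2:ℝ)^M * ((Tord p m).card : ℝ) - (p:ℝ)^m|
      ≤ |(2:ℝ)^M * ((Tord p m).card : ℝ) - S'| + |S' - (p:ℝ)^m| := abs_sub_le _ _ _
    _ ≤ 2^M * (6*(m:ℝ)^2) * (p:ℝ)^(m-1) + 2^M * (2 * (p:ℝ)^(m-1) * Real.sqrt p) :=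
        add_le_add hstep1 hstep2
    _ ≤ (2:ℝ)^M * (6*(m:ℝ)^2 + 2) * ((p:ℝ)^(m-1) * Real.sqrt p) := by
        have hX : (0:ℝ) ≤ (p:ℝ)^(m-1) := by positivity
        have h2M : (0:ℝ) < (2:ℝ)^M := by positivity
        have hm2 : (0:ℝ) ≤ (m:ℝ)^2 := by positivity
        nlinarith [mul_le_mul_of_nonneg_left hsp1 (mul_nonneg (mul_nonneg h2M.le hm2) hX)]

end Main

section Final

open Finset

/-- `2^{m(m-1)/2} · m! · N^{(m)}(p) - p^m = O(p^{m-1/2})` as `p → ∞` over primes;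
in particular `N^{(m)}(p) = p^m/(2^{m(m-1)/2} m!) + o(p^m)`. -/
theorem asymptotic_count (m : ℕ) (hm : 2 ≤ m) :
    ∃ C : ℝ, 0 < C ∧ ∀ p : ℕ, p.Prime →
      |(2 ^ (m * (m - 1) / 2) * m.factorial * numDiophTuples p m : ℝ) - (p : ℝ) ^ m| ≤
        C * (p : ℝ) ^ m / Real.sqrt p := by
  refine ⟨2^(m*(m-1)/2) * (6*(m:ℝ)^2 + 2), by positivity, ?_⟩
  intro p hp
  haveI : Fact p.Prime := ⟨hp⟩
  rcases eq_or_ne p 2 with rfl | hp2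
  · -- p = 2
    have hN : numDiophTuples 2 m = 0 := by
      rw [numDiophTuples]
      have hempty : {s : Finset (ZMod 2) | s.card = m ∧ (0 : ZMod 2) ∉ s ∧
          ∀ a ∈ s, ∀ b ∈ s, a ≠ b → IsSquare (a * b + 1)} = ∅ := by
        ext s
        simp only [Set.mem_setOf_eq, Set.mem_empty_iff_false, iff_false, not_and]
        intro hcard h0
        exfalso
        have h01 : ∀ x : ZMod 2, x = 0 ∨ x = 1 := by
          intro x
          fin_cases x
          · exact Or.inl rfl
          · exact Or.inr rfl
        have hsub : s ⊆ {1} := by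
          intro x hx
          rcases h01 x with rfl | rfl
          · exact absurd hx h0
          · exact Finset.mem_singleton_self 1
        have hle : s.card ≤ 1 := le_trans (Finset.card_le_card hsub) (by simp)
        omega
      rw [hempty, Set.ncard_empty]
    rw [hN]
    push_cast
    rw [mul_zero, zero_sub, abs_neg, abs_of_nonneg (by positivity : (0:ℝ) ≤ (2:ℝ)^m)]
    have hs2pos : 0 < Real.sqrt 2 := Real.sqrt_pos.mpr (by norm_num)
    have hs2 : Real.sqrt 2 ≤ 2 := by
      nlinarith [Real.sq_sqrt (by norm_num : (0:ℝ) ≤ 2), Real.sqrt_nonneg 2]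
    rw [le_div_iff₀ hs2pos]
    have hC2 : (2:ℝ) ≤ 2^(m*(m-1)/2) * (6*(m:ℝ)^2 + 2) := by
      have h1 : (1:ℝ) ≤ 2^(m*(m-1)/2) := one_le_pow₀ (by norm_num)
      have h2 : (2:ℝ) ≤ (m:ℝ) := by exact_mod_cast hm
      nlinarith
    calc (2:ℝ)^m * Real.sqrt 2 ≤ (2:ℝ)^m * (2^(m*(m-1)/2) * (6*(m:ℝ)^2 + 2)) :=
        mul_le_mul_of_nonneg_left (hs2.trans hC2) (by positivity)
      _ = 2^(m*(m-1)/2) * (6*(m:ℝ)^2 + 2) * 2^m := by ring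
  · have h := main_odd p m hp2 hm
    rw [pairsP_card m, Tord_card p m] at h
    push_cast at h ⊢
    rw [mul_div_assoc]
    have heq : (2:ℝ)^(m*(m-1)/2) * (m.factorial:ℝ) * (numDiophTuples p m : ℝ)
        = (2:ℝ)^(m*(m-1)/2) * ((m.factorial:ℝ) * (numDiophTuples p m:ℝ)) := by ring
    rw [heq]
    exact h

end Final
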